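/- Let f be in k(x,y) and suppose that (c_{j,ℓ}) is a family of polynomials in k[x], indexed by pairs (j,ℓ) of natural numbers with j ≤ J and ℓ ≤ M, not all zero, such that Σ_{j,ℓ} c_{j,ℓ}·D_x^j(D_y^ℓ(f)) = 0 in k(x,y). Let r be the smallest ℓ such that c_{j,ℓ} ≠ 0 for some j. Then L = Σ_{j=0}^{J} c_{j,r}·D_x^j is a telescoper for f: L is a nonzero operator and there exists g in k(x,y) with Σ_{j=0}^{J} c_{j,r}·D_x^j(f) = D_y(g). In particular, f admits a telescoper of order at most J whose coefficients are polynomials in k[x] of degree at most max_{j,ℓ} deg_x(c_{j,ℓ}). -/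

import Mathlib

open Polynomial

noncomputable section

/-- A map is a derivation: it is additive and satisfies the Leibniz rule. -/
def IsDeriv {F : Type*} [CommRing F] (D : F → F) : Prop :=
  (∀ a b, D (a + b) = D a + D b) ∧ ∀ a b, D (a * b) = a * D b + b * D a

/-- Degree in `x` of an element of `k[x][y]` (inner variable `x`, outer variable `y`). -/
def degX {k : Type*} [Field k] (Q : Polynomial (Polynomial k)) : ℕ :=
  Q.support.sup fun i => (Q.coeff i).natDegree

/-- Partial derivative with respect to `x` on `k[x][y]`. -/
def derivX {k : Type*} [Field k] (Q : Polynomial (Polynomial k)) : Polynomial (Polynomial k) :=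
  Q.sum fun i a => Polynomial.C (Polynomial.derivative a) * Polynomial.X ^ i

/-- The embedding `k[x][y] → k(x)(y)`. -/
def toF {k : Type*} [Field k] : Polynomial (Polynomial k) →+* RatFunc (RatFunc k) :=
  (algebraMap (Polynomial (RatFunc k)) (RatFunc (RatFunc k))).comp
    (Polynomial.mapRingHom (algebraMap (Polynomial k) (RatFunc k)))

/-- The embedding `k(x) → k(x)(y)`. -/
def ratToF {k : Type*} [Field k] : RatFunc k →+* RatFunc (RatFunc k) :=
  (algebraMap (Polynomial (RatFunc k)) (RatFunc (RatFunc k))).comp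
    (Polynomial.C : RatFunc k →+* Polynomial (RatFunc k))

/-- The embedding `k(x)[y] → k(x)(y)`. -/
def kyToF {k : Type*} [Field k] : Polynomial (RatFunc k) →+* RatFunc (RatFunc k) :=
  algebraMap (Polynomial (RatFunc k)) (RatFunc (RatFunc k))

/-- The embedding `k[x][y] → k(x)[y]`. -/
def toKy {k : Type*} [Field k] : Polynomial (Polynomial k) →+* Polynomial (RatFunc k) :=
  Polynomial.mapRingHom (algebraMap (Polynomial k) (RatFunc k))

/-- The embedding `k[y] → k[x][y]` (a polynomial in `y` viewed in `k[x][y]`). -/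
def yToXY {k : Type*} [Field k] : Polynomial k →+* Polynomial (Polynomial k) :=
  Polynomial.mapRingHom (Polynomial.C : k →+* Polynomial k)

/-- The Hermite matrix associated with a factorisation `Q = Qs * Qneg`, with respect to the
monomial bases: its columns are the coefficient vectors (in `y`, coefficients in `k[x]`) of
`Qs * D_y(y^j) - E * y^j` for `j < dm` (where `E = Qs * D_y(Qneg) / Qneg`) and of
`Qneg * y^j` for `j < dy - dm`. -/
def hermiteMat {k : Type*} [Field k] (Qs Qneg E : Polynomial (Polynomial k)) (dy dm : ℕ) :
    Matrix (Fin dy) (Fin dy) (Polynomial k) :=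
  Matrix.of fun i j =>
    if (j : ℕ) < dm then
      (Qs * Polynomial.derivative (Polynomial.X ^ (j : ℕ)) - E * Polynomial.X ^ (j : ℕ)).coeff i
    else
      (Qneg * Polynomial.X ^ ((j : ℕ) - dm)).coeff i

section DerivLemmas
variable {F : Type*} [CommRing F] {D : F → F} (hD : IsDeriv D)
include hD

theorem isDeriv_zero : D 0 = 0 := by
  have h := hD.1 0 0
  rw [add_zero] at h
  exact (left_eq_add.mp h)

theorem isDeriv_sub (a b : F) : D (a - b) = D a - D b := by
  have hneg : D (-b) = - D b := by
    have h := hD.1 b (-b)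
    rw [add_neg_cancel, isDeriv_zero hD] at h
    linear_combination -h
  rw [sub_eq_add_neg, hD.1 a (-b), hneg, sub_eq_add_neg]

theorem isDeriv_const_mul {c : F} (hc : D c = 0) (u : F) : D (c * u) = c * D u := by
  rw [hD.2 c u, hc, mul_zero, add_zero]

theorem isDeriv_iter_const_mul {c : F} (hc : D c = 0) (u : F) (n : ℕ) :
    D^[n] (c * u) = c * D^[n] u := by
  induction n generalizing u with
  | zero => simp
  | succ n ih => rw [Function.iterate_succ_apply, isDeriv_const_mul hD hc, ih, Function.iterate_succ_apply]

/-- iterates as additive maps over sums -/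
theorem isDeriv_sum {ι : Type*} (s : Finset ι) (g : ι → F) :
    D (∑ i ∈ s, g i) = ∑ i ∈ s, D (g i) := by
  classical
  induction s using Finset.induction with
  | empty => simpa using isDeriv_zero hD
  | insert a s h ih => rw [Finset.sum_insert h, hD.1, ih, Finset.sum_insert h]

theorem isDeriv_iter_sum {ι : Type*} (s : Finset ι) (g : ι → F) (n : ℕ) :
    D^[n] (∑ i ∈ s, g i) = ∑ i ∈ s, D^[n] (g i) := by
  induction n generalizing g with
  | zero => simp
  | succ n ih =>
    simp only [Function.iterate_succ_apply]
    rw [isDeriv_sum hD, ih]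

theorem isDeriv_iter_zero (n : ℕ) : D^[n] 0 = 0 := by
  induction n with
  | zero => rfl
  | succ n ih => rw [Function.iterate_succ_apply, isDeriv_zero hD, ih]

end DerivLemmas

theorem derivX_coeff {k : Type*} [Field k] (Q : Polynomial (Polynomial k)) (n : ℕ) :
    (derivX Q).coeff n = Polynomial.derivative (Q.coeff n) := by
  classical
  rw [derivX, Polynomial.coeff_sum]
  rw [Polynomial.sum]
  simp only [Polynomial.coeff_C_mul, Polynomial.coeff_X_pow, mul_ite, mul_one, mul_zero]
  rw [Finset.sum_ite_eq Q.support n fun i => Polynomial.derivative (Q.coeff i)]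
  by_cases h : n ∈ Q.support
  · simp [h]
  · simp [h, Polynomial.notMem_support_iff.mp h]

theorem derivX_derivative {k : Type*} [Field k] (Q : Polynomial (Polynomial k)) :
    derivX (Polynomial.derivative Q) = Polynomial.derivative (derivX Q) := by
  refine Polynomial.ext fun n => ?_
  rw [derivX_coeff, Polynomial.coeff_derivative, Polynomial.coeff_derivative, derivX_coeff]
  simp [Polynomial.derivative_mul, Polynomial.derivative_natCast]

section Comm
variable {k : Type*} [Field k]
  {Dy : RatFunc (RatFunc k) → RatFunc (RatFunc k)}
  {Dx : RatFunc (RatFunc k) → RatFunc (RatFunc k)}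

theorem toKy_deriv (A : Polynomial (Polynomial k)) :
    Polynomial.derivative (toKy A) = toKy (Polynomial.derivative A) := by
  simp [toKy, Polynomial.coe_mapRingHom, Polynomial.derivative_map]

theorem Dy_toF (hDyval : ∀ A : Polynomial (RatFunc k),
      Dy (kyToF A) = kyToF (Polynomial.derivative A))
    (A : Polynomial (Polynomial k)) : Dy (toF A) = toF (Polynomial.derivative A) := by
  have h : toF (k := k) A = kyToF (toKy A) := rfl
  rw [h, hDyval, toKy_deriv]
  rfl

theorem isDeriv_bracket {F : Type*} [CommRing F] {Dx Dy : F → F}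
    (hDx : IsDeriv Dx) (hDy : IsDeriv Dy) :
    IsDeriv (fun v => Dx (Dy v) - Dy (Dx v)) := by
  constructor
  · intro a b
    simp only [hDy.1, hDx.1]
    ring
  · intro a b
    simp only [hDy.2 a b, hDx.1, hDx.2, hDy.1, hDy.2]
    ring

theorem isDeriv_eq_zero_of_mul {F : Type*} [Field F] {Δ : F → F} (hΔ : IsDeriv Δ)
    {u a b : F} (hb : b ≠ 0) (h : u * b = a) (ha : Δ a = 0) (hb0 : Δ b = 0) : Δ u = 0 := by
  have h2 := hΔ.2 u b
  rw [h, ha, hb0, mul_zero, zero_add] at h2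
  exact (mul_eq_zero.mp h2.symm).resolve_left hb

theorem toF_injective : Function.Injective (toF (k := k)) := by
  have h1 : Function.Injective (toKy (k := k)) :=
    Polynomial.map_injective _ (RatFunc.algebraMap_injective k)
  have h2 : Function.Injective (kyToF (k := k)) := RatFunc.algebraMap_injective (RatFunc k)
  exact h2.comp h1

theorem bracket_toF (hDyval : ∀ A : Polynomial (RatFunc k),
      Dy (kyToF A) = kyToF (Polynomial.derivative A))
    (hDxval : ∀ A : Polynomial (Polynomial k), Dx (toF A) = toF (derivX A))
    (A : Polynomial (Polynomial k)) : Dx (Dy (toF A)) - Dy (Dx (toF A)) = 0 := by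
  rw [Dy_toF hDyval, hDxval, hDxval, Dy_toF hDyval, derivX_derivative, sub_self]

theorem bracket_kyToF (hDx : IsDeriv Dx) (hDy : IsDeriv Dy)
    (hDyval : ∀ A : Polynomial (RatFunc k),
      Dy (kyToF A) = kyToF (Polynomial.derivative A))
    (hDxval : ∀ A : Polynomial (Polynomial k), Dx (toF A) = toF (derivX A))
    (P : Polynomial (RatFunc k)) : Dx (Dy (kyToF P)) - Dy (Dx (kyToF P)) = 0 := by
  have hΔ := isDeriv_bracket hDx hDy
  induction P using Polynomial.induction_on with
  | C a =>
    have hb : toF (k := k) (Polynomial.C a.denom) ≠ 0 := by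
      rw [map_ne_zero_iff _ toF_injective]
      simpa using RatFunc.denom_ne_zero a
    have heq : kyToF (Polynomial.C a) * toF (Polynomial.C a.denom) = toF (Polynomial.C a.num) := by
      have h1 : toF (k := k) (Polynomial.C a.denom)
          = kyToF (Polynomial.C (algebraMap (Polynomial k) (RatFunc k) a.denom)) := by
        have : toKy (k := k) (Polynomial.C a.denom)
            = Polynomial.C (algebraMap (Polynomial k) (RatFunc k) a.denom) := by
          simp [toKy]
        rw [show toF (k := k) (Polynomial.C a.denom) = kyToF (toKy (Polynomial.C a.denom)) from rfl,
          this]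
      have h2 : toF (k := k) (Polynomial.C a.num)
          = kyToF (Polynomial.C (algebraMap (Polynomial k) (RatFunc k) a.num)) := by
        have : toKy (k := k) (Polynomial.C a.num)
            = Polynomial.C (algebraMap (Polynomial k) (RatFunc k) a.num) := by
          simp [toKy]
        rw [show toF (k := k) (Polynomial.C a.num) = kyToF (toKy (Polynomial.C a.num)) from rfl,
          this]
      have key : a * algebraMap (Polynomial k) (RatFunc k) a.denom
          = algebraMap (Polynomial k) (RatFunc k) a.num := by
        have h := RatFunc.num_div_denom a
        have hne := RatFunc.algebraMap_ne_zero (RatFunc.denom_ne_zero a)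
        exact ((div_eq_iff hne).mp h).symm
      rw [h1, h2, ← map_mul, ← Polynomial.C_mul, key]
    exact isDeriv_eq_zero_of_mul hΔ hb heq (bracket_toF hDyval hDxval _)
      (bracket_toF hDyval hDxval _)
  | add p q hp hq =>
    rw [map_add]
    simp only [hDy.1, hDx.1]
    linear_combination hp + hq
  | monomial n a ih =>
    have hX : Dx (Dy (kyToF (Polynomial.X : Polynomial (RatFunc k))))
        - Dy (Dx (kyToF (Polynomial.X : Polynomial (RatFunc k)))) = 0 := by
      have : kyToF (Polynomial.X : Polynomial (RatFunc k)) = toF (Polynomial.X) := by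
        rw [show toF (k := k) (Polynomial.X) = kyToF (toKy Polynomial.X) from rfl]
        simp [toKy]
      rw [this]
      exact bracket_toF hDyval hDxval _
    have hsplit : kyToF (Polynomial.C a * Polynomial.X ^ (n + 1))
        = kyToF (Polynomial.C a * Polynomial.X ^ n) * kyToF (Polynomial.X) := by
      rw [← map_mul]
      ring_nf
    rw [hsplit]
    have h2 := hΔ.2 (kyToF (Polynomial.C a * Polynomial.X ^ n))
      (kyToF (Polynomial.X : Polynomial (RatFunc k)))
    simp only at h2
    rw [h2, ih, hX, mul_zero, mul_zero, add_zero]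

theorem dxdy_comm (hDx : IsDeriv Dx) (hDy : IsDeriv Dy)
    (hDyval : ∀ A : Polynomial (RatFunc k),
      Dy (kyToF A) = kyToF (Polynomial.derivative A))
    (hDxval : ∀ A : Polynomial (Polynomial k), Dx (toF A) = toF (derivX A))
    (v : RatFunc (RatFunc k)) : Dx (Dy v) = Dy (Dx v) := by
  have hΔ := isDeriv_bracket hDx hDy
  have hb : kyToF (k := k) v.denom ≠ 0 :=
    RatFunc.algebraMap_ne_zero (RatFunc.denom_ne_zero v)
  have heq : v * kyToF v.denom = kyToF v.num :=
    ((div_eq_iff hb).mp (RatFunc.num_div_denom v)).symm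
  have h0 := isDeriv_eq_zero_of_mul hΔ hb heq
    (bracket_kyToF hDx hDy hDyval hDxval _) (bracket_kyToF hDx hDy hDyval hDxval _)
  linear_combination h0

end Comm

section Kernel
variable {k : Type*} [Field k] [CharZero k]
  {Dy : RatFunc (RatFunc k) → RatFunc (RatFunc k)}

theorem exists_antideriv {F : Type*} [Field F] [CharZero F] (P : Polynomial F) :
    ∃ Q : Polynomial F, Polynomial.derivative Q = P := by
  refine ⟨∑ i ∈ Finset.range (P.natDegree + 1),
    Polynomial.C (P.coeff i / (i + 1)) * Polynomial.X ^ (i + 1), ?_⟩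
  rw [Polynomial.derivative_sum]
  have hterm : ∀ i : ℕ, Polynomial.derivative
      (Polynomial.C (P.coeff i / (i + 1)) * Polynomial.X ^ (i + 1) : Polynomial F)
      = Polynomial.C (P.coeff i) * Polynomial.X ^ i := by
    intro i
    rw [Polynomial.derivative_C_mul_X_pow]
    simp only [Nat.add_sub_cancel]
    congr 1
    push_cast
    rw [div_mul_cancel₀]
    exact Nat.cast_add_one_ne_zero i
  simp only [hterm]
  simp only [Polynomial.C_mul_X_pow_eq_monomial]
  exact (Polynomial.as_sum_range' P (P.natDegree + 1) (Nat.lt_succ_self _)).symm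

theorem dy_ker (hDy : IsDeriv Dy)
    (hDyval : ∀ A : Polynomial (RatFunc k),
      Dy (kyToF A) = kyToF (Polynomial.derivative A))
    (v : RatFunc (RatFunc k)) (hv : Dy v = 0) :
    ∃ a : RatFunc k, v = kyToF (Polynomial.C a) := by
  haveI : CharZero (RatFunc k) := charZero_of_injective_algebraMap (RatFunc.algebraMap_injective k)
  set p := v.num with hp
  set q := v.denom with hq
  have hqne : q ≠ 0 := RatFunc.denom_ne_zero v
  have hb : kyToF (k := k) q ≠ 0 := RatFunc.algebraMap_ne_zero hqne
  have heq : v * kyToF q = kyToF p :=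
    ((div_eq_iff hb).mp (RatFunc.num_div_denom v)).symm
  have hD : v * kyToF (Polynomial.derivative q) = kyToF (Polynomial.derivative p) := by
    have := congrArg Dy heq
    rw [hDy.2 v (kyToF q), hv, hDyval, mul_zero, add_zero, hDyval] at this
    linear_combination this
  have hpq : p * Polynomial.derivative q = q * Polynomial.derivative p := by
    apply RatFunc.algebraMap_injective (RatFunc k)
    rw [map_mul, map_mul]
    calc kyToF p * kyToF (Polynomial.derivative q)
        = v * kyToF q * kyToF (Polynomial.derivative q) := by rw [heq]
      _ = (v * kyToF (Polynomial.derivative q)) * kyToF q := by ring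
      _ = kyToF (Polynomial.derivative p) * kyToF q := by rw [hD]
      _ = kyToF q * kyToF (Polynomial.derivative p) := by ring
  have hcop : IsCoprime p q := RatFunc.isCoprime_num_denom v
  have hdq : Polynomial.derivative q = 0 := by
    by_contra hne
    have hdvd : q ∣ Polynomial.derivative q := by
      refine (hcop.symm).dvd_of_dvd_mul_right ?_
      exact ⟨Polynomial.derivative p, by linear_combination hpq⟩
    have hqd : q.natDegree ≠ 0 := by
      intro h0
      obtain ⟨a, ha⟩ := Polynomial.natDegree_eq_zero.mp h0
      rw [← ha] at hne
      simp at hne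
    have h1 := Polynomial.natDegree_derivative_lt hqd
    have h2 := Polynomial.natDegree_le_of_dvd hdvd hne
    omega
  have hdp : Polynomial.derivative p = 0 := by
    rw [hdq, mul_zero] at hpq
    rcases mul_eq_zero.mp hpq.symm with h | h
    · exact absurd h hqne
    · exact h
  obtain ⟨b, hbq⟩ := Polynomial.natDegree_eq_zero.mp
    (Polynomial.natDegree_eq_zero_of_derivative_eq_zero hdq)
  obtain ⟨a, hap⟩ := Polynomial.natDegree_eq_zero.mp
    (Polynomial.natDegree_eq_zero_of_derivative_eq_zero hdp)
  have hbne : b ≠ 0 := by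
    intro h
    rw [h] at hbq
    simp at hbq
    exact hqne hbq.symm
  refine ⟨a / b, ?_⟩
  have : kyToF (Polynomial.C (a / b)) * kyToF q = kyToF p := by
    rw [← hbq, ← hap, ← map_mul, ← Polynomial.C_mul, div_mul_cancel₀ _ hbne]
  exact mul_right_cancel₀ hb (by rw [heq, this])

theorem dy_iter_ker (hDy : IsDeriv Dy)
    (hDyval : ∀ A : Polynomial (RatFunc k),
      Dy (kyToF A) = kyToF (Polynomial.derivative A))
    (n : ℕ) (v : RatFunc (RatFunc k)) (hv : Dy^[n] v = 0) :
    ∃ P : Polynomial (RatFunc k), v = kyToF P := by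
  haveI : CharZero (RatFunc k) := charZero_of_injective_algebraMap (RatFunc.algebraMap_injective k)
  induction n generalizing v with
  | zero => exact ⟨0, by simpa using hv⟩
  | succ n ih =>
    rw [Function.iterate_succ_apply] at hv
    obtain ⟨P, hP⟩ := ih (Dy v) hv
    obtain ⟨Q, hQ⟩ := exists_antideriv P
    have h0 : Dy (v - kyToF Q) = 0 := by
      have hsub := hDy.1 (v - kyToF Q) (kyToF Q)
      rw [sub_add_cancel] at hsub
      rw [hDyval, hQ, ← hP] at hsub
      linear_combination hsub.symm
    obtain ⟨a, ha⟩ := dy_ker hDy hDyval _ h0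
    refine ⟨Q + Polynomial.C a, ?_⟩
    rw [map_add, ← ha]
    ring

theorem dy_iter_surj (hDy : IsDeriv Dy)
    (hDyval : ∀ A : Polynomial (RatFunc k),
      Dy (kyToF A) = kyToF (Polynomial.derivative A))
    (n : ℕ) (v : RatFunc (RatFunc k)) (hv : Dy^[n] v = 0) :
    ∃ w : RatFunc (RatFunc k), v = Dy w := by
  haveI : CharZero (RatFunc k) := charZero_of_injective_algebraMap (RatFunc.algebraMap_injective k)
  obtain ⟨P, hP⟩ := dy_iter_ker hDy hDyval n v hv
  obtain ⟨Q, hQ⟩ := exists_antideriv P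
  exact ⟨kyToF Q, by rw [hDyval, hQ, hP]⟩

end Kernel


/-- from an annihilating operator to a telescoper. Suppose
`∑_{j ≤ J, ℓ ≤ M} c_{j,ℓ}·D_x^j(D_y^ℓ(f)) = 0` with `c_{j,ℓ} ∈ k[x]` not all zero, and let
`r` be the smallest `ℓ` such that `c_{j,ℓ} ≠ 0` for some `j`. Then `L = ∑_j c_{j,r}·D_x^j` is
a (nonzero) telescoper for `f`: there is `g ∈ k(x,y)` with `∑_j c_{j,r}·D_x^j(f) = D_y(g)`;
in particular `f` admits a telescoper of order at most `J` whose coefficients are polynomials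
in `k[x]` of degree at most `max_{j,ℓ} deg_x(c_{j,ℓ})`. -/
theorem stmt_19 {k : Type*} [Field k] [CharZero k]
    (f : RatFunc (RatFunc k))
    (Dy : RatFunc (RatFunc k) → RatFunc (RatFunc k)) (hDy : IsDeriv Dy)
    (hDyval : ∀ A : Polynomial (RatFunc k), Dy (kyToF A) = kyToF (Polynomial.derivative A))
    (Dx : RatFunc (RatFunc k) → RatFunc (RatFunc k)) (hDx : IsDeriv Dx)
    (hDxval : ∀ A : Polynomial (Polynomial k), Dx (toF A) = toF (derivX A))
    (J M : ℕ) (c : ℕ → ℕ → Polynomial k)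
    (hne : ∃ j ≤ J, ∃ ℓ ≤ M, c j ℓ ≠ 0)
    (hrel : ∑ j ∈ Finset.range (J + 1), ∑ ℓ ∈ Finset.range (M + 1),
      toF (Polynomial.C (c j ℓ)) * Dx^[j] (Dy^[ℓ] f) = 0)
    (r : ℕ) (hrM : r ≤ M)
    (hr1 : ∃ j ≤ J, c j r ≠ 0)
    (hr2 : ∀ ℓ < r, ∀ j ≤ J, c j ℓ = 0) :
    (∃ j ≤ J, c j r ≠ 0) ∧
    (∃ g : RatFunc (RatFunc k),
      ∑ j ∈ Finset.range (J + 1), toF (Polynomial.C (c j r)) * Dx^[j] f = Dy g) ∧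
    (∀ j ≤ J, (c j r).natDegree ≤
      (Finset.range (J + 1) ×ˢ Finset.range (M + 1)).sup fun w => (c w.1 w.2).natDegree) := by
  refine ⟨hr1, ?_, ?_⟩
  · -- main part
    have hcomm : Function.Commute Dx Dy := fun v => dxdy_comm hDx hDy hDyval hDxval v
    have hcomm' : ∀ (j ℓ : ℕ) (v : RatFunc (RatFunc k)),
        Dx^[j] (Dy^[ℓ] v) = Dy^[ℓ] (Dx^[j] v) := by
      intro j ℓ v
      exact ((hcomm.iterate_left j).iterate_right ℓ) v
    have hconst : ∀ p : Polynomial k, Dy (toF (Polynomial.C p)) = 0 := by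
      intro p
      rw [Dy_toF hDyval, Polynomial.derivative_C, map_zero]
    set F : ℕ → RatFunc (RatFunc k) := fun j => Dx^[j] f with hF
    set S : RatFunc (RatFunc k) := ∑ j ∈ Finset.range (J + 1), ∑ m ∈ Finset.range (M + 1 - r),
      toF (Polynomial.C (c j (r + m))) * Dy^[m] (F j) with hSdef
    have hS : Dy^[r] S = 0 := by
      rw [hSdef, isDeriv_iter_sum hDy]
      calc ∑ j ∈ Finset.range (J + 1), Dy^[r] (∑ m ∈ Finset.range (M + 1 - r),
              toF (Polynomial.C (c j (r + m))) * Dy^[m] (F j))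
          = ∑ j ∈ Finset.range (J + 1), ∑ ℓ ∈ Finset.range (M + 1),
              toF (Polynomial.C (c j ℓ)) * Dx^[j] (Dy^[ℓ] f) := by
            refine Finset.sum_congr rfl fun j hj => ?_
            have hjJ : j ≤ J := Nat.lt_succ_iff.mp (Finset.mem_range.mp hj)
            rw [isDeriv_iter_sum hDy]
            have step1 : ∀ m ∈ Finset.range (M + 1 - r),
                Dy^[r] (toF (Polynomial.C (c j (r + m))) * Dy^[m] (F j))
                = toF (Polynomial.C (c j (r + m))) * Dy^[r + m] (F j) := by
              intro m _
              rw [isDeriv_iter_const_mul hDy (hconst _), ← Function.iterate_add_apply]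
            rw [Finset.sum_congr rfl step1]
            have step2 : ∑ m ∈ Finset.range (M + 1 - r),
                toF (Polynomial.C (c j (r + m))) * Dy^[r + m] (F j)
                = ∑ ℓ ∈ Finset.Ico r (M + 1), toF (Polynomial.C (c j ℓ)) * Dy^[ℓ] (F j) :=
              (Finset.sum_Ico_eq_sum_range (f := fun ℓ =>
                toF (Polynomial.C (c j ℓ)) * Dy^[ℓ] (F j)) (m := r) (n := M + 1)).symm
            rw [step2]
            have step3 : ∑ ℓ ∈ Finset.Ico 0 r, toF (Polynomial.C (c j ℓ)) * Dy^[ℓ] (F j) = 0 := by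
              refine Finset.sum_eq_zero fun ℓ hℓ => ?_
              have : ℓ < r := (Finset.mem_Ico.mp hℓ).2
              rw [hr2 ℓ this j hjJ, map_zero, map_zero, zero_mul]
            have step4 : ∑ ℓ ∈ Finset.range (M + 1), toF (Polynomial.C (c j ℓ)) * Dy^[ℓ] (F j)
                = ∑ ℓ ∈ Finset.Ico r (M + 1), toF (Polynomial.C (c j ℓ)) * Dy^[ℓ] (F j) := by
              rw [Finset.range_eq_Ico,
                ← Finset.sum_Ico_consecutive _ (Nat.zero_le r) (Nat.le_succ_of_le hrM),
                step3, zero_add]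
            rw [← step4]
            refine Finset.sum_congr rfl fun ℓ _ => ?_
            rw [hcomm' j ℓ f]
        _ = 0 := hrel
    obtain ⟨w0, hw0⟩ := dy_iter_surj hDy hDyval r S hS
    set T1 : RatFunc (RatFunc k) := ∑ j ∈ Finset.range (J + 1), ∑ m ∈ Finset.range (M - r),
      toF (Polynomial.C (c j (r + (m + 1)))) * Dy^[m] (F j) with hT1def
    have hsplit : S = (∑ j ∈ Finset.range (J + 1), toF (Polynomial.C (c j r)) * F j) + Dy T1 := by
      rw [hT1def, isDeriv_sum hDy, hSdef, ← Finset.sum_add_distrib]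
      refine Finset.sum_congr rfl fun j hj => ?_
      have step5 : ∀ m ∈ Finset.range (M - r),
          Dy (toF (Polynomial.C (c j (r + (m + 1)))) * Dy^[m] (F j))
          = toF (Polynomial.C (c j (r + (m + 1)))) * Dy^[m + 1] (F j) := by
        intro m _
        rw [isDeriv_const_mul hDy (hconst _), Function.iterate_succ_apply']
      have hM1r : M + 1 - r = (M - r) + 1 := by omega
      rw [hM1r, Finset.sum_range_succ', isDeriv_sum hDy, Finset.sum_congr rfl step5]
      simp only [Nat.add_zero, Function.iterate_zero_apply]
      rw [add_comm]
    have hmain : ∑ j ∈ Finset.range (J + 1), toF (Polynomial.C (c j r)) * Dx^[j] f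
        = Dy (w0 - T1) := by
      rw [isDeriv_sub hDy, ← hw0, hsplit]
      ring
    exact ⟨w0 - T1, hmain⟩
  · intro j hj
    have hmem : (j, r) ∈ Finset.range (J + 1) ×ˢ Finset.range (M + 1) := by
      rw [Finset.mem_product]
      exact ⟨Finset.mem_range.mpr (Nat.lt_succ_of_le hj),
        Finset.mem_range.mpr (Nat.lt_succ_of_le hrM)⟩
    exact Finset.le_sup (f := fun w : ℕ × ℕ => (c w.1 w.2).natDegree) hmem
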